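/- Let Q ⊆ P be prime ideals of a commutative ring R and let R_P be the localization of R at P. If the extension Q_P of Q in R_P is weakly annihilated, then Q is a weakly annihilated ideal of R. -/

import Mathlib

/-- An ideal `I` of a commutative ring is weakly annihilated if for each `a ∈ I` and
`b ∉ I` there exists `c` with `c * a = 0` but `c * b ≠ 0`. -/
def WeaklyAnnihilated {R : Type*} [CommRing R] (I : Ideal R) : Prop :=
  ∀ a ∈ I, ∀ b ∉ I, ∃ c : R, c * a = 0 ∧ c * b ≠ 0

theorem stmt5 {R : Type*} [CommRing R] (Q P : Ideal R) [Q.IsPrime] [P.IsPrime]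
    (hQP : Q ≤ P)
    (h : WeaklyAnnihilated (Q.map (algebraMap R (Localization.AtPrime P)))) :
    WeaklyAnnihilated Q := by
  intro a ha b hb
  set φ := algebraMap R (Localization.AtPrime P) with hφ
  have hdisj : Disjoint (P.primeCompl : Set R) (Q : Set R) := by
    intro s hs1 hs2 x hx
    exact absurd (hQP (hs2 hx)) (hs1 hx)
  have hcomap : (Q.map φ).comap φ = Q :=
    IsLocalization.comap_map_of_isPrime_disjoint P.primeCompl _ (I := Q) ‹Q.IsPrime› hdisj
  have hbQ : φ b ∉ Q.map φ := by
    intro hmem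
    exact hb (by rw [← hcomap]; exact hmem)
  obtain ⟨c', hc1, hc2⟩ := h (φ a) (Ideal.mem_map_of_mem φ ha) (φ b) hbQ
  obtain ⟨⟨r, s⟩, hrs⟩ := IsLocalization.surj P.primeCompl c'
  dsimp only at hrs; rw [← hφ] at hrs
  -- c' * φ s = φ r
  have hra : φ (r * a) = 0 := by
    rw [map_mul, ← hrs, mul_comm c' (φ s), mul_assoc, hc1, mul_zero]
  obtain ⟨u, hu⟩ := (IsLocalization.map_eq_zero_iff P.primeCompl _ _).mp hra
  refine ⟨u * r, by rw [mul_assoc]; exact hu, ?_⟩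
  intro hzero
  apply hc2
  have : φ (u * (r * b)) = 0 := by
    rw [show u * (r * b) = u * r * b by ring, hzero, map_zero]
  have hrb : φ (r * b) = 0 := by
    have hu' : IsUnit (φ u) := IsLocalization.map_units _ u
    rw [map_mul] at this
    exact (hu'.mul_right_eq_zero).mp this
  have hs' : IsUnit (φ (s : R)) := IsLocalization.map_units _ s
  have : c' * φ s * φ b = 0 := by rw [hrs, ← map_mul, hrb]
  have : c' * φ b * φ s = 0 := by rw [show c' * φ b * φ s = c' * φ s * φ b by ring, this]
  exact (hs'.mul_left_eq_zero).mp this
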